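/- For a Lipschitz function φ : Z_p → ℂ with Lipschitz constant L(φ) (with respect to the p-adic metric), the commutator [D, π(φ)] on the weighted ℓ² space of the p-adic tree is bounded with operator norm at most L(φ). -/

import Mathlib

/-- The vertex `k + i·p^n` viewed in level `n+1` of the `p`-adic tree. -/
def treeIdx (p n : ℕ) (k : Fin (p ^ n)) (i : Fin p) : Fin (p ^ (n + 1)) :=
  ⟨(k : ℕ) + (i : ℕ) * p ^ n, by
    have hk := k.2
    have hi := i.2
    calc (k : ℕ) + (i : ℕ) * p ^ n < ((i : ℕ) + 1) * p ^ n := by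
          rw [Nat.add_mul, one_mul]; omega
      _ ≤ p * p ^ n := Nat.mul_le_mul_right _ hi
      _ = p ^ (n + 1) := by ring⟩

/-- For a Lipschitz function `φ` on `ℤ_p` with Lipschitz constant `L`, the commutator
`[D, π(φ)]` is bounded with operator norm at most `L`:
`‖[D,π(φ)] g‖² ≤ L² ‖g‖²` for all `g` in the weighted `ℓ²` space. -/
theorem stmt16 (p : ℕ) [hp : Fact p.Prime] (φ : ℤ_[p] → ℂ) (L : ℝ)
    (hL : ∀ x y : ℤ_[p], ‖φ x - φ y‖ ≤ L * ‖x - y‖)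
    (g : ∀ n : ℕ, Fin (p ^ n) → ℂ)
    (hg : Summable (fun x : Σ n : ℕ, Fin (p ^ n) => ‖g x.1 x.2‖ ^ 2 * ((p : ℝ) ^ x.1)⁻¹)) :
    ∑' x : Σ n : ℕ, Fin (p ^ n),
        ‖((p : ℂ) ^ x.1 / (p : ℂ)) * ∑ i : Fin p,
            (φ (((x.2 : ℕ) : ℤ_[p])) - φ ((((x.2 : ℕ) + (i : ℕ) * p ^ x.1 : ℕ)) : ℤ_[p])) *
              g (x.1 + 1) (treeIdx p x.1 x.2 i)‖ ^ 2 * ((p : ℝ) ^ x.1)⁻¹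
      ≤ L ^ 2 * ∑' x : Σ n : ℕ, Fin (p ^ n), ‖g x.1 x.2‖ ^ 2 * ((p : ℝ) ^ x.1)⁻¹ := by
  have hp1 : 1 < p := hp.out.one_lt
  have hpR : (0:ℝ) < p := by exact_mod_cast hp.out.pos
  have hL0 : 0 ≤ L := by
    have h := hL 0 1
    simp only [zero_sub, norm_neg, norm_one, mul_one] at h
    exact le_trans (norm_nonneg _) h
  set G : (Σ n : ℕ, Fin (p ^ n)) → ℝ :=
    fun x => ‖g x.1 x.2‖ ^ 2 * ((p : ℝ) ^ x.1)⁻¹ with hG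
  set F : (Σ n : ℕ, Fin (p ^ n)) → ℝ := fun x =>
    ‖((p : ℂ) ^ x.1 / (p : ℂ)) * ∑ i : Fin p,
        (φ (((x.2 : ℕ) : ℤ_[p])) - φ ((((x.2 : ℕ) + (i : ℕ) * p ^ x.1 : ℕ)) : ℤ_[p])) *
          g (x.1 + 1) (treeIdx p x.1 x.2 i)‖ ^ 2 * ((p : ℝ) ^ x.1)⁻¹ with hF
  set e : ((Σ n : ℕ, Fin (p ^ n)) × Fin p) → Σ n : ℕ, Fin (p ^ n) :=
    fun z => ⟨z.1.1 + 1, treeIdx p z.1.1 z.1.2 z.2⟩ with he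
  have heinj : Function.Injective e := by
    rintro ⟨⟨n, k⟩, i⟩ ⟨⟨m, k'⟩, i'⟩ h
    simp only [he, Sigma.mk.inj_iff, add_left_inj] at h
    obtain ⟨rfl, h2⟩ := h
    have h3 : (k : ℕ) + (i : ℕ) * p ^ n = (k' : ℕ) + (i' : ℕ) * p ^ n :=
      congrArg Fin.val (eq_of_heq h2)
    have hpn : 0 < p ^ n := Nat.pow_pos hp.out.pos
    have hk : (k : ℕ) = (k' : ℕ) := by
      have e1 : ((k : ℕ) + (i : ℕ) * p ^ n) % p ^ n = (k : ℕ) := by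
        rw [Nat.add_mul_mod_self_right, Nat.mod_eq_of_lt k.2]
      have e2 : ((k' : ℕ) + (i' : ℕ) * p ^ n) % p ^ n = (k' : ℕ) := by
        rw [Nat.add_mul_mod_self_right, Nat.mod_eq_of_lt k'.2]
      rw [← e1, ← e2, h3]
    have hi : (i : ℕ) = (i' : ℕ) := by
      have e1 : ((k : ℕ) + (i : ℕ) * p ^ n) / p ^ n = (i : ℕ) := by
        rw [Nat.add_mul_div_right _ _ hpn, Nat.div_eq_of_lt k.2, zero_add]
      have e2 : ((k' : ℕ) + (i' : ℕ) * p ^ n) / p ^ n = (i' : ℕ) := by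
        rw [Nat.add_mul_div_right _ _ hpn, Nat.div_eq_of_lt k'.2, zero_add]
      rw [← e1, ← e2, h3]
    exact Prod.ext (Sigma.ext rfl (heq_of_eq (Fin.ext hk))) (Fin.ext hi)
  -- pointwise bound
  have key : ∀ x : Σ n : ℕ, Fin (p ^ n),
      F x ≤ L ^ 2 * ∑ i : Fin p, G (e (x, i)) := by
    rintro ⟨n, k⟩
    -- norm of the diff of φ
    have hdiff : ∀ i : Fin p,
        ‖φ (((k : ℕ) : ℤ_[p])) - φ ((((k : ℕ) + (i : ℕ) * p ^ n : ℕ)) : ℤ_[p])‖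
          ≤ L * ((p : ℝ) ^ n)⁻¹ := by
      intro i
      refine le_trans (hL _ _) (mul_le_mul_of_nonneg_left ?_ hL0)
      have hcast : (((k : ℕ) : ℤ_[p])) - ((((k : ℕ) + (i : ℕ) * p ^ n : ℕ)) : ℤ_[p])
          = -(((i : ℕ) : ℤ_[p]) * ((p : ℤ_[p]) ^ n)) := by push_cast; ring
      rw [hcast, norm_neg, norm_mul, norm_pow, PadicInt.norm_p]
      calc ‖((i : ℕ) : ℤ_[p])‖ * ((p:ℝ))⁻¹ ^ n ≤ 1 * ((p:ℝ))⁻¹ ^ n :=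
            mul_le_mul_of_nonneg_right (PadicInt.norm_le_one _) (by positivity)
        _ = ((p : ℝ) ^ n)⁻¹ := by rw [one_mul, inv_pow]
    have hnormS : ‖∑ i : Fin p,
        (φ (((k : ℕ) : ℤ_[p])) - φ ((((k : ℕ) + (i : ℕ) * p ^ n : ℕ)) : ℤ_[p])) *
          g (n + 1) (treeIdx p n k i)‖
        ≤ L * ((p : ℝ) ^ n)⁻¹ * ∑ i : Fin p, ‖g (n + 1) (treeIdx p n k i)‖ := by
      rw [Finset.mul_sum]
      refine le_trans (norm_sum_le _ _) (Finset.sum_le_sum fun i _ => ?_)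
      rw [norm_mul]
      exact mul_le_mul_of_nonneg_right (hdiff i) (norm_nonneg _)
    have hCS : (∑ i : Fin p, ‖g (n + 1) (treeIdx p n k i)‖) ^ 2
        ≤ (p : ℝ) * ∑ i : Fin p, ‖g (n + 1) (treeIdx p n k i)‖ ^ 2 := by
      have := sq_sum_le_card_mul_sum_sq (s := (Finset.univ : Finset (Fin p)))
        (f := fun i => ‖g (n + 1) (treeIdx p n k i)‖)
      simpa using this
    have hnormc : ‖((p : ℂ) ^ n / (p : ℂ))‖ = (p : ℝ) ^ n / p := by
      rw [norm_div, norm_pow, Complex.norm_natCast]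
    have hS0 : (0:ℝ) ≤ ∑ i : Fin p, ‖g (n + 1) (treeIdx p n k i)‖ :=
      Finset.sum_nonneg fun i _ => norm_nonneg _
    have step1 : F ⟨n, k⟩ ≤ ((p : ℝ) ^ n / p * (L * ((p : ℝ) ^ n)⁻¹)) ^ 2 *
        ((p : ℝ) * ∑ i : Fin p, ‖g (n + 1) (treeIdx p n k i)‖ ^ 2) * ((p : ℝ) ^ n)⁻¹ := by
      simp only [hF]
      refine mul_le_mul_of_nonneg_right ?_ (by positivity)
      rw [norm_mul, mul_pow, hnormc]
      calc ((p : ℝ) ^ n / p) ^ 2 * ‖∑ i : Fin p, _‖ ^ 2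
          ≤ ((p : ℝ) ^ n / p) ^ 2 * ((L * ((p : ℝ) ^ n)⁻¹ *
              ∑ i : Fin p, ‖g (n + 1) (treeIdx p n k i)‖) ^ 2) := by
            refine mul_le_mul_of_nonneg_left ?_ (by positivity)
            refine pow_le_pow_left₀ (norm_nonneg _) ?_ 2
            rw [mul_assoc] at hnormS ⊢
            exact le_trans hnormS le_rfl
        _ = ((p : ℝ) ^ n / p * (L * ((p : ℝ) ^ n)⁻¹)) ^ 2 *
              (∑ i : Fin p, ‖g (n + 1) (treeIdx p n k i)‖) ^ 2 := by ring
        _ ≤ ((p : ℝ) ^ n / p * (L * ((p : ℝ) ^ n)⁻¹)) ^ 2 *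
              ((p : ℝ) * ∑ i : Fin p, ‖g (n + 1) (treeIdx p n k i)‖ ^ 2) :=
            mul_le_mul_of_nonneg_left hCS (by positivity)
    refine le_trans step1 (le_of_eq ?_)
    have hsum : ∑ i : Fin p, G (e (⟨n, k⟩, i))
        = (∑ i : Fin p, ‖g (n + 1) (treeIdx p n k i)‖ ^ 2) * ((p : ℝ) ^ (n + 1))⁻¹ := by
      simp only [hG, he]
      rw [← Finset.sum_mul]
    rw [hsum]
    have hpne : (p : ℝ) ≠ 0 := ne_of_gt hpR
    field_simp
    ring
  -- summability
  have hGcomp : ∀ i : Fin p, Summable (fun x : Σ n : ℕ, Fin (p ^ n) => G (e (x, i))) :=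
    fun i => hg.comp_injective (i := fun x => e (x, i))
      (fun a b h => (Prod.ext_iff.1 (heinj h)).1)
  have hHsum : Summable (fun x : Σ n : ℕ, Fin (p ^ n) =>
      L ^ 2 * ∑ i : Fin p, G (e (x, i))) :=
    (summable_sum fun i _ => hGcomp i).mul_left _
  have hFnonneg : ∀ x, 0 ≤ F x := fun x => by positivity
  have hFsum : Summable F := Summable.of_nonneg_of_le hFnonneg key hHsum
  have hGe : Summable (G ∘ e) := hg.comp_injective heinj
  calc ∑' x, F x ≤ ∑' x, L ^ 2 * ∑ i : Fin p, G (e (x, i)) :=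
        Summable.tsum_le_tsum key hFsum hHsum
    _ = L ^ 2 * ∑' x, ∑ i : Fin p, G (e (x, i)) := tsum_mul_left
    _ = L ^ 2 * ∑' z : (Σ n : ℕ, Fin (p ^ n)) × Fin p, G (e z) := by
        congr 1
        exact ((Summable.tsum_prod' hGe fun x => Summable.of_finite).trans
          (tsum_congr fun x => tsum_fintype _)).symm
    _ ≤ L ^ 2 * ∑' x, G x := by
        refine mul_le_mul_of_nonneg_left ?_ (sq_nonneg L)
        exact Summable.tsum_le_tsum_of_inj e heinj (fun c _ => by positivity)
          (fun z => le_rfl) hGe hg
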